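/- The class of languages accepted by quasi-deterministic stateless simple (qDNS) sensing 5'→3' WK automata is a proper subset of the class REG of regular languages: every language accepted by a stateless simple sensing 5'→3' WK automaton is regular (indeed of the form (v₁+⋯+v_i)*(u₁+⋯+u_j)* where v₁,…,v_i are the words readable by the first head and u₁,…,u_j those readable by the second head), and the regular language b*ab* + b* is accepted by no quasi-deterministic stateless sensing 5'→3' WK automaton. -/

import Mathlib

open Computability

/-- The two-letter alphabet `{a, b}`. -/
inductive Letter : Type
  | a : Letter
  | b : Letter
deriving DecidableEq

instance : Fintype Letter :=
  ⟨⟨{Letter.a, Letter.b}, by simp⟩, fun x => by cases x <;> simp⟩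

open Letter

/-- A sensing 5'→3' Watson-Crick automaton over the alphabet `T` with state set `Q`:
an initial state `q0`, a set `F` of final states, and a transition mapping
`δ : Q × T* × T* → 2^Q` that is nonempty for only finitely many triples. -/
structure WKAutomaton (T : Type) (Q : Type) where
  q0 : Q
  F : Set Q
  δ : Q → List T → List T → Set Q
  finite_delta : {t : Q × List T × List T | (δ t.1 t.2.1 t.2.2).Nonempty}.Finite

namespace WKAutomaton

variable {T Q : Type}

/-- One computation step on configurations:
`(q, x ++ w' ++ y) ⇒ (q', w')` iff `q' ∈ δ q x y`. -/
def Step (A : WKAutomaton T Q) (c c' : Q × List T) : Prop :=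
  ∃ x y : List T, c.2 = x ++ c'.2 ++ y ∧ c'.1 ∈ A.δ c.1 x y

/-- The accepted language: words `w` with `(q₀, w) ⇒* (q_F, λ)` for some final `q_F`. -/
def Lang (A : WKAutomaton T Q) : Set (List T) :=
  {w | ∃ qf ∈ A.F, Relation.ReflTransGen A.Step (A.q0, w) (qf, [])}

/-- `A` is deterministic: in every configuration at most one computation step
(choice of `x`, `y`, `w'`, `q'`) is applicable. -/
def Deterministic (A : WKAutomaton T Q) : Prop :=
  ∀ (q : Q) (w x₁ y₁ w₁ x₂ y₂ w₂ : List T) (q₁ q₂ : Q),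
    w = x₁ ++ w₁ ++ y₁ → q₁ ∈ A.δ q x₁ y₁ →
    w = x₂ ++ w₂ ++ y₂ → q₂ ∈ A.δ q x₂ y₂ →
    x₁ = x₂ ∧ y₁ = y₂ ∧ w₁ = w₂ ∧ q₁ = q₂

/-- `A` is quasi-deterministic: for every configuration `(q,w)`, whenever
`(q,w) ⇒ (p,u)` and `(q,w) ⇒ (r,v)`, it holds that `p = r`. -/
def QuasiDet (A : WKAutomaton T Q) : Prop :=
  ∀ (q : Q) (w : List T) (p r : Q) (u v : List T),
    A.Step (q, w) (p, u) → A.Step (q, w) (r, v) → p = r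

/-- `A` is state-deterministic: for every state `q` there is at most one state `p`
with `p ∈ δ(q,u,v)` for some words `u`, `v`. -/
def StateDet (A : WKAutomaton T Q) : Prop :=
  ∀ (q p₁ p₂ : Q) (u₁ v₁ u₂ v₂ : List T),
    p₁ ∈ A.δ q u₁ v₁ → p₂ ∈ A.δ q u₂ v₂ → p₁ = p₂

/-- `A` is stateless: `Q = F = {q₀}`. -/
def Stateless (A : WKAutomaton T Q) : Prop :=
  (∀ q : Q, q = A.q0) ∧ A.F = {A.q0}

/-- `A` is all-final: `Q = F`. -/
def AllFinal (A : WKAutomaton T Q) : Prop := A.F = Set.univ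

/-- `A` is simple: at most one head reads in each step. -/
def Simple (A : WKAutomaton T Q) : Prop :=
  ∀ (q : Q) (u v : List T), (A.δ q u v).Nonempty → u = [] ∨ v = []

/-- `A` is 1-limited: exactly one letter is read in each step. -/
def OneLimited (A : WKAutomaton T Q) : Prop :=
  ∀ (q : Q) (u v : List T), (A.δ q u v).Nonempty →
    (u = [] ∧ v.length = 1) ∨ (u.length = 1 ∧ v = [])

end WKAutomaton

/-- Equality of languages modulo the empty word. -/
def EqModLambda {T : Type} (L₁ L₂ : Set (List T)) : Prop :=
  ∀ w : List T, w ≠ [] → (w ∈ L₁ ↔ w ∈ L₂)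

/-- `L` is accepted (modulo the empty word) by some sensing 5'→3' WK automaton
with a finite state set satisfying the property `P`. -/
def AcceptsWith (T : Type) (P : ∀ Q : Type, WKAutomaton T Q → Prop)
    (L : Set (List T)) : Prop :=
  ∃ (Q : Type) (_ : Finite Q) (A : WKAutomaton T Q), P Q A ∧ EqModLambda A.Lang L

/-- The language `b*ab* + b*`. -/
def Lbabb : Set (List Letter) :=
  {w | (∃ i j : ℕ, w = List.replicate i b ++ a :: List.replicate j b) ∨
       (∃ i : ℕ, w = List.replicate i b)}

section Auxiliary

open Classical in
theorem isRegular_of_congr {T S : Type} [Finite S] (L : Language T) (f : List T → S)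
    (hc : ∀ w x c, f w = f x → f (w ++ [c]) = f (x ++ [c]))
    (hm : ∀ w x, f w = f x → (w ∈ L ↔ x ∈ L)) : L.IsRegular := by
  have : Fintype S := Fintype.ofFinite S
  refine ⟨S, this,
    ⟨fun s c => if h : ∃ w, f w = s then f (h.choose ++ [c]) else s,
     f [], {s | ∃ w, f w = s ∧ w ∈ L}⟩, ?_⟩
  set M : DFA T S := ⟨fun s c => if h : ∃ w, f w = s then f (h.choose ++ [c]) else s,
     f [], {s | ∃ w, f w = s ∧ w ∈ L}⟩ with hM
  have key : ∀ w : List T, M.evalFrom M.start w = f w := by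
    intro w
    induction w using List.reverseRecOn with
    | nil => rfl
    | append_singleton w c ih =>
      rw [DFA.evalFrom_append_singleton, ih]
      show (if h : ∃ w', f w' = f w then f (h.choose ++ [c]) else f w) = f (w ++ [c])
      rw [dif_pos ⟨w, rfl⟩]
      exact hc _ _ _ (Exists.choose_spec (⟨w, rfl⟩ : ∃ w', f w' = f w))
  ext x
  rw [DFA.mem_accepts]
  show M.evalFrom M.start x ∈ _ ↔ _
  rw [key]
  constructor
  · rintro ⟨w, hfw, hwL⟩; exact (hm w x hfw).1 hwL
  · intro hx; exact ⟨x, rfl, hx⟩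

variable {T : Type}

theorem kstar_snoc_mem {V : Language T} {d v : List T} (hd : d ∈ V∗) (hv : v ∈ V) :
    d ++ v ∈ V∗ := by
  obtain ⟨L, rfl, hL⟩ := Language.mem_kstar.1 hd
  exact Language.mem_kstar.2 ⟨L ++ [v], by simp, by
    intro y hy
    rcases List.mem_append.1 hy with h | h
    · exact hL y h
    · simp at h; subst h; exact hv⟩

theorem kstar_cons_mem {V : Language T} {d v : List T} (hv : v ∈ V) (hd : d ∈ V∗) :
    v ++ d ∈ V∗ := by
  obtain ⟨L, rfl, hL⟩ := Language.mem_kstar.1 hd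
  exact Language.mem_kstar.2 ⟨v :: L, by simp, by
    intro y hy
    rcases List.mem_cons.1 hy with h | h
    · subst h; exact hv
    · exact hL y h⟩

theorem mem_kstar_snoc {V : Language T} {w : List T} {c : T} :
    w ++ [c] ∈ V∗ ↔ ∃ d p v, d ∈ V∗ ∧ v ∈ V ∧ w = d ++ p ∧ p ++ [c] = v := by
  constructor
  · intro h
    obtain ⟨L, hL, hmem⟩ := Language.mem_kstar.1 h
    clear h
    induction L using List.reverseRecOn generalizing w with
    | nil => simp at hL
    | append_singleton L v ih =>
      rw [List.flatten_append, List.flatten_cons, List.flatten_nil, List.append_nil] at hL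
      rcases List.eq_nil_or_concat v with rfl | ⟨q, c', rfl⟩
      · rw [List.append_nil] at hL
        exact ih hL (fun y hy => hmem y (List.mem_append_left _ hy))
      · simp only [List.concat_eq_append] at hmem
        rw [List.concat_eq_append, ← List.append_assoc] at hL
        obtain ⟨h1, h2⟩ := List.append_inj' hL.symm rfl
        simp at h2; subst h2
        exact ⟨L.flatten, q, _,
          Language.join_mem_kstar (fun y hy => hmem y (List.mem_append_left _ hy)),
          hmem _ (by simp), h1.symm, rfl⟩
  · rintro ⟨d, p, v, hd, hv, rfl, rfl⟩
    rw [List.append_assoc]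
    exact kstar_snoc_mem hd hv

theorem mem_mul_kstar_snoc {V U : Language T} {w : List T} {c : T} :
    w ++ [c] ∈ (V∗ * U∗ : Language T) ↔
      (∃ d p v, d ∈ V∗ ∧ v ∈ V ∧ w = d ++ p ∧ p ++ [c] = v) ∨
      (∃ d p u, d ∈ (V∗ * U∗ : Language T) ∧ u ∈ U ∧ w = d ++ p ∧ p ++ [c] = u) := by
  constructor
  · intro h
    obtain ⟨dv, hdv, du, hdu, heq⟩ := Language.mem_mul.1 h
    rcases List.eq_nil_or_concat du with rfl | ⟨q, c', rfl⟩
    · rw [List.append_nil] at heq; subst heq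
      exact Or.inl (mem_kstar_snoc.1 hdv)
    · rw [List.concat_eq_append, ← List.append_assoc] at heq
      rw [List.concat_eq_append] at hdu
      obtain ⟨h1, h2⟩ := List.append_inj' heq rfl
      simp at h2; subst h2
      obtain ⟨e, p, u, he, hu, rfl, hpu⟩ := mem_kstar_snoc.1 hdu
      refine Or.inr ⟨dv ++ e, p, u, Language.mem_mul.2 ⟨dv, hdv, e, he, rfl⟩, hu, ?_, hpu⟩
      rw [← h1, List.append_assoc]
  · rintro (⟨d, p, v, hd, hv, rfl, rfl⟩ | ⟨d, p, u, hd, hu, rfl, rfl⟩)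
    · rw [List.append_assoc]
      exact Language.mem_mul.2 ⟨d ++ (p ++ [c]), kstar_snoc_mem hd hv, [],
        Language.nil_mem_kstar _, by simp⟩
    · obtain ⟨dv, hdv, du, hdu, rfl⟩ := Language.mem_mul.1 hd
      refine Language.mem_mul.2 ⟨dv, hdv, du ++ (p ++ [c]), kstar_snoc_mem hdu hu, by simp⟩

/-- Pending suffixes in the `V`-phase. -/
def gset (V : Language T) (w : List T) : Set (List T) :=
  {r | ∃ d p v, d ∈ V∗ ∧ v ∈ V ∧ w = d ++ p ∧ p ++ r = v}

/-- Pending suffixes in the `U`-phase. -/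
def hset (V U : Language T) (w : List T) : Set (List T) :=
  {r | ∃ d p u, d ∈ (V∗ * U∗ : Language T) ∧ u ∈ U ∧ w = d ++ p ∧ p ++ r = u}

theorem kstar_snoc_iff_gset {V : Language T} {w : List T} {c : T} :
    w ++ [c] ∈ V∗ ↔ [c] ∈ gset V w := mem_kstar_snoc

theorem mul_snoc_iff {V U : Language T} {w : List T} {c : T} :
    w ++ [c] ∈ (V∗ * U∗ : Language T) ↔ [c] ∈ gset V w ∨ [c] ∈ hset V U w :=
  mem_mul_kstar_snoc

theorem gset_snoc (V : Language T) (w : List T) (c : T) :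
    gset V (w ++ [c]) = {r | c :: r ∈ gset V w} ∪ {r | r ∈ V ∧ [c] ∈ gset V w} := by
  ext r
  simp only [gset, Set.mem_setOf_eq, Set.mem_union]
  constructor
  · rintro ⟨d, p, v, hd, hv, heq, hpr⟩
    rcases List.eq_nil_or_concat p with rfl | ⟨q, c', rfl⟩
    · rw [List.append_nil] at heq
      simp only [List.nil_append] at hpr
      subst hpr
      exact Or.inr ⟨hv, kstar_snoc_iff_gset.1 (heq ▸ hd)⟩
    · rw [List.concat_eq_append] at heq hpr
      rw [← List.append_assoc] at heq
      obtain ⟨h1, h2⟩ := List.append_inj' heq rfl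
      simp only [List.cons.injEq, and_true] at h2
      subst h2
      exact Or.inl ⟨d, q, v, hd, hv, h1, by simpa using hpr⟩
  · rintro (⟨d, p, v, hd, hv, heq, hpr⟩ | ⟨hrV, hc⟩)
    · exact ⟨d, p ++ [c], v, hd, hv, by rw [heq, List.append_assoc], by simpa using hpr⟩
    · exact ⟨w ++ [c], [], r, kstar_snoc_iff_gset.2 hc, hrV, by simp, by simp⟩

theorem hset_snoc (V U : Language T) (w : List T) (c : T) :
    hset V U (w ++ [c]) =
      {r | c :: r ∈ hset V U w} ∪ {r | r ∈ U ∧ ([c] ∈ gset V w ∨ [c] ∈ hset V U w)} := by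
  ext r
  simp only [hset, Set.mem_setOf_eq, Set.mem_union]
  constructor
  · rintro ⟨d, p, u, hd, hu, heq, hpr⟩
    rcases List.eq_nil_or_concat p with rfl | ⟨q, c', rfl⟩
    · rw [List.append_nil] at heq
      simp only [List.nil_append] at hpr
      subst hpr
      exact Or.inr ⟨hu, mul_snoc_iff.1 (heq ▸ hd)⟩
    · rw [List.concat_eq_append] at heq hpr
      rw [← List.append_assoc] at heq
      obtain ⟨h1, h2⟩ := List.append_inj' heq rfl
      simp only [List.cons.injEq, and_true] at h2
      subst h2
      exact Or.inl ⟨d, q, u, hd, hu, h1, by simpa using hpr⟩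
  · rintro (⟨d, p, u, hd, hu, heq, hpr⟩ | ⟨hrU, hc⟩)
    · exact ⟨d, p ++ [c], u, hd, hu, by rw [heq, List.append_assoc], by simpa using hpr⟩
    · exact ⟨w ++ [c], [], r, mul_snoc_iff.2 hc, hrU, by simp, by simp⟩

theorem suffixes_finite {V : Language T} (hV : (V : Set (List T)).Finite) :
    {r : List T | ∃ v ∈ V, r <:+ v}.Finite := by
  have : {r : List T | ∃ v ∈ V, r <:+ v} = ⋃ v ∈ V, {r | r <:+ v} := by
    ext r; simp
  rw [this]
  exact Set.Finite.biUnion hV fun v _ =>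
    Set.Finite.subset v.tails.finite_toSet (fun r hr => by simpa [List.mem_tails] using hr)

theorem gset_subset {V : Language T} (w : List T) :
    gset V w ⊆ {r : List T | ∃ v ∈ V, r <:+ v} := by
  rintro r ⟨d, p, v, _, hv, _, hpr⟩
  exact ⟨v, hv, p, hpr⟩

theorem hset_subset {V U : Language T} (w : List T) :
    hset V U w ⊆ {r : List T | ∃ u ∈ U, r <:+ u} := by
  rintro r ⟨d, p, u, _, hu, _, hpr⟩
  exact ⟨u, hu, p, hpr⟩

theorem isRegular_kstar_mul_kstar (V U : Language T)
    (hV : (V : Set (List T)).Finite) (hU : (U : Set (List T)).Finite) :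
    Language.IsRegular (V∗ * U∗ : Language T) := by
  set f0 : List T → Set (List T) × Set (List T) × Prop :=
    fun w => (gset V w, hset V U w, w ∈ (V∗ * U∗ : Language T)) with hf0
  have hrange : (Set.range f0).Finite := by
    apply Set.Finite.subset
      (Set.Finite.prod (suffixes_finite hV).finite_subsets
        (Set.Finite.prod (suffixes_finite hU).finite_subsets (Set.finite_univ (α := Prop))))
    rintro _ ⟨w, rfl⟩
    exact ⟨gset_subset w, hset_subset w, trivial⟩
  have : Finite ↥(Set.range f0) := hrange.to_subtype
  apply isRegular_of_congr (V∗ * U∗ : Language T)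
    (fun w => (⟨f0 w, Set.mem_range_self w⟩ : ↥(Set.range f0)))
  · intro w x c h
    have h' : f0 w = f0 x := congrArg Subtype.val h
    have hg : gset V w = gset V x := congrArg Prod.fst h'
    have hh : hset V U w = hset V U x := congrArg (fun t => t.2.1) h'
    apply Subtype.ext
    show f0 (w ++ [c]) = f0 (x ++ [c])
    have hacc : (w ++ [c] ∈ (V∗ * U∗ : Language T)) = (x ++ [c] ∈ (V∗ * U∗ : Language T)) := by
      rw [mul_snoc_iff, mul_snoc_iff, hg, hh]
    rw [hf0]
    simp only
    rw [gset_snoc, gset_snoc, hset_snoc, hset_snoc, hg, hh, hacc]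
  · intro w x h
    have h' : f0 w = f0 x := congrArg Subtype.val h
    have := congrArg (fun t => t.2.2) h'
    rw [show (w ∈ (V∗ * U∗ : Language T)) = (x ∈ (V∗ * U∗ : Language T)) from this]

/-- The language of a stateless simple WK automaton is `V∗ * U∗`. -/
theorem WKAutomaton.stateless_simple_lang {T Q : Type} (A : WKAutomaton T Q)
    (hq : ∀ q : Q, q = A.q0) (hF : A.F = {A.q0}) (hs : A.Simple)
    (V U : Language T) (hV : V = {v : List T | A.q0 ∈ A.δ A.q0 v []})
    (hU : U = {u : List T | A.q0 ∈ A.δ A.q0 [] u}) :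
    A.Lang = (V∗ * U∗ : Language T) := by
  subst hV; subst hU
  set V : Language T := {v : List T | A.q0 ∈ A.δ A.q0 v []} with hV
  set U : Language T := {u : List T | A.q0 ∈ A.δ A.q0 [] u} with hU
  have hδ' : ∀ {q q' : Q} {x y : List T}, q' ∈ A.δ q x y → A.q0 ∈ A.δ A.q0 x y := by
    intro q q' x y h
    have h1 := hq q
    have h2 := hq q'
    subst h1; subst h2; exact h
  ext w
  constructor
  · rintro ⟨qf, hqf, htr⟩
    have key : ∀ p : Q × List T, Relation.ReflTransGen A.Step p (A.q0, []) →
        p.2 ∈ (V∗ * U∗ : Language T) := by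
      intro p h
      induction h using Relation.ReflTransGen.head_induction_on with
      | refl =>
        exact Language.mem_mul.2 ⟨[], Language.nil_mem_kstar _, [],
          Language.nil_mem_kstar _, rfl⟩
      | head hstep htail ih =>
        obtain ⟨x, y, heq, hmem⟩ := hstep
        obtain ⟨dv, hdv, du, hdu, hj⟩ := Language.mem_mul.1 ih
        rw [heq, ← hj]
        rcases hs _ x y ⟨_, hmem⟩ with rfl | rfl
        · have hy : y ∈ U := hδ' hmem
          simp only [List.nil_append, List.append_assoc]
          exact Language.mem_mul.2 ⟨dv, hdv, du ++ y, kstar_snoc_mem hdu hy, rfl⟩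
        · have hx : x ∈ V := hδ' hmem
          simp only [List.append_nil, ← List.append_assoc]
          exact Language.mem_mul.2 ⟨x ++ dv, kstar_cons_mem hx hdv, du, hdu,
            by rw [List.append_assoc]⟩
    have h2 := hq qf
    subst h2
    exact key (A.q0, w) htr
  · intro hw
    obtain ⟨dv, hdv, du, hdu, rfl⟩ := Language.mem_mul.1 hw
    refine ⟨A.q0, by rw [hF]; rfl, ?_⟩
    obtain ⟨Lv, rfl, hLv⟩ := Language.mem_kstar.1 hdv
    obtain ⟨Lu, rfl, hLu⟩ := Language.mem_kstar.1 hdu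
    have stripV : ∀ (L : List (List T)), (∀ v ∈ L, v ∈ V) → ∀ z,
        Relation.ReflTransGen A.Step (A.q0, L.flatten ++ z) (A.q0, z) := by
      intro L
      induction L with
      | nil => intro _ z; exact Relation.ReflTransGen.refl
      | cons v L ih =>
        intro hmem z
        refine Relation.ReflTransGen.head ?_
          (ih (fun _ h => hmem _ (List.mem_cons_of_mem _ h)) z)
        exact ⟨v, [], by simp, hmem v List.mem_cons_self⟩
    have stripU : ∀ (L : List (List T)), (∀ u ∈ L, u ∈ U) →
        Relation.ReflTransGen A.Step (A.q0, L.flatten) (A.q0, []) := by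
      intro L
      induction L using List.reverseRecOn with
      | nil => intro _; exact Relation.ReflTransGen.refl
      | append_singleton L u ih =>
        intro hmem
        refine Relation.ReflTransGen.head ?_ (ih fun _ h => hmem _ (List.mem_append_left _ h))
        exact ⟨[], u, by simp, hmem u (by simp)⟩
    exact (stripV Lv hLv Lu.flatten).trans (stripU Lu hLu)

/-- Words readable by the first head form a finite set. -/
theorem WKAutomaton.V_finite {T Q : Type} (A : WKAutomaton T Q) :
    ({v : List T | A.q0 ∈ A.δ A.q0 v []} : Set (List T)).Finite := by
  have hpre := A.finite_delta.preimage
    (f := fun v : List T => (A.q0, v, ([] : List T)))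
    (fun v₁ _ v₂ _ h => by simpa using congrArg (fun t : Q × List T × List T => t.2.1) h)
  exact hpre.subset (fun v hv => Set.mem_preimage.2 ⟨A.q0, hv⟩)

/-- Words readable by the second head form a finite set. -/
theorem WKAutomaton.U_finite {T Q : Type} (A : WKAutomaton T Q) :
    ({u : List T | A.q0 ∈ A.δ A.q0 [] u} : Set (List T)).Finite := by
  have hpre := A.finite_delta.preimage
    (f := fun u : List T => (A.q0, ([] : List T), u))
    (fun u₁ _ u₂ _ h => by simpa using congrArg (fun t : Q × List T × List T => t.2.2) h)
  exact hpre.subset (fun u hu => Set.mem_preimage.2 ⟨A.q0, hu⟩)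

/-- A word over `{a,b}` with no `a` is a block of `b`s. -/
theorem count_a_zero (w : List Letter) (h : w.count a = 0) :
    w = List.replicate w.length b := by
  induction w with
  | nil => rfl
  | cons x t ih =>
    cases x with
    | a => simp [List.count_cons] at h
    | b =>
      rw [List.count_cons] at h
      simp only [List.length_cons, List.replicate_succ]
      have : t.count a = 0 := by omega
      rw [← ih this]
  
theorem lbabb_count (w : List Letter) : w ∈ Lbabb ↔ w.count a ≤ 1 := by
  constructor
  · rintro (⟨i, j, rfl⟩ | ⟨i, rfl⟩) <;>
      simp [List.count_append, List.count_cons, List.count_replicate]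
  · intro h
    rcases Nat.lt_or_ge (w.count a) 1 with h0 | h1
    · exact Or.inr ⟨w.length, count_a_zero w (by omega)⟩
    · have h1' : w.count a = 1 := le_antisymm h h1
      have hmem : a ∈ w := by
        rw [← List.count_pos_iff]
        omega
      obtain ⟨s, t, rfl⟩ := List.append_of_mem hmem
      rw [List.count_append, List.count_cons] at h1'
      simp only [beq_self_eq_true, if_true] at h1'
      have hs : s.count a = 0 := by omega
      have ht : t.count a = 0 := by omega
      refine Or.inl ⟨s.length, t.length, ?_⟩
      conv_lhs => rw [count_a_zero s hs, count_a_zero t ht]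

end Auxiliary

/-- The class of languages accepted by quasi-deterministic stateless simple (qDNS)
sensing 5'→3' WK automata is a proper subset of the class REG of regular
languages: the language accepted by a stateless simple sensing 5'→3' WK
automaton is of the form `V∗ * U∗` where `V` is the set of words readable by
the first head and `U` the set of words readable by the second head, and is
regular; on the other hand, the regular language `b*ab* + b*` is accepted by
no quasi-deterministic stateless sensing 5'→3' WK automaton. -/
theorem qDNS_proper_subset_REG :
    (∀ (T : Type) (Q : Type), Finite Q → ∀ A : WKAutomaton T Q,
      A.Stateless → A.Simple →
      let V : Language T := {v : List T | A.q0 ∈ A.δ A.q0 v []}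
      let U : Language T := {u : List T | A.q0 ∈ A.δ A.q0 [] u}
      A.Lang = (V∗ * U∗ : Language T) ∧
      Language.IsRegular (A.Lang : Language T)) ∧
    Language.IsRegular (Lbabb : Language Letter) ∧
    ¬ AcceptsWith Letter (fun _ A => A.QuasiDet ∧ A.Stateless) Lbabb := by
  refine ⟨?_, ?_, ?_⟩
  · intro T Q hQ A hSL hSimp
    intro V U
    obtain ⟨hq, hF⟩ := hSL
    have hlang := A.stateless_simple_lang hq hF hSimp V U rfl rfl
    refine ⟨hlang, ?_⟩
    rw [hlang]
    exact isRegular_kstar_mul_kstar V U A.V_finite A.U_finite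
  · apply isRegular_of_congr (Lbabb : Language Letter)
      (fun w => (⟨min (w.count a) 2, by omega⟩ : Fin 3))
    · intro w x c h
      have h' : min (w.count a) 2 = min (x.count a) 2 := congrArg Fin.val h
      apply Fin.ext
      show min ((w ++ [c]).count a) 2 = min ((x ++ [c]).count a) 2
      rw [List.count_append, List.count_append]
      omega
    · intro w x h
      have h' : min (w.count a) 2 = min (x.count a) 2 := congrArg Fin.val h
      exact (lbabb_count w).trans (Iff.trans (by omega) (lbabb_count x).symm)
  · rintro ⟨Q, hfin, A, ⟨hqd, hq, hF⟩, heq⟩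
    have hδ' : ∀ {q q' : Q} {x y : List Letter}, q' ∈ A.δ q x y → A.q0 ∈ A.δ A.q0 x y := by
      intro q q' x y h
      have h1 := hq q
      have h2 := hq q'
      subst h1; subst h2; exact h
    have ha : [a] ∈ A.Lang := (heq [a] (by simp)).2 (Or.inl ⟨0, 0, rfl⟩)
    obtain ⟨qf, hqf, htr⟩ := ha
    have h2 := hq qf
    subst h2
    have strip : ∀ p : Q × List Letter, Relation.ReflTransGen A.Step p (A.q0, []) →
        p.2 ≠ [] → ∃ x y w', p.2 = x ++ w' ++ y ∧ x ++ y ≠ [] ∧ A.q0 ∈ A.δ A.q0 x y := by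
      intro p h
      induction h using Relation.ReflTransGen.head_induction_on with
      | refl => intro hne; exact absurd rfl hne
      | head hstep htail ih =>
        intro hne
        obtain ⟨x, y, heq2, hmem⟩ := hstep
        by_cases hxy : x ++ y = ([] : List Letter)
        · obtain ⟨rfl, rfl⟩ := List.append_eq_nil_iff.1 hxy
          simp only [List.nil_append, List.append_nil] at heq2
          obtain ⟨x, y, w', h1, h2, h3⟩ := ih (by rw [← heq2]; exact hne)
          exact ⟨x, y, w', heq2 ▸ h1, h2, h3⟩
        · exact ⟨x, y, _, heq2, hxy, hδ' hmem⟩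
    obtain ⟨x, y, w', hdec, hne, hδa⟩ := strip (A.q0, [a]) htr (by simp)
    have hcases : (x = [a] ∧ y = ([] : List Letter)) ∨ (x = ([] : List Letter) ∧ y = [a]) := by
      rcases x with _ | ⟨cx, x⟩ <;> rcases y with _ | ⟨cy, y⟩ <;>
        rcases w' with _ | ⟨cw, w'⟩ <;> simp_all
    have haa : [a, a] ∈ A.Lang := by
      refine ⟨A.q0, by rw [hF]; rfl, ?_⟩
      rcases hcases with ⟨rfl, rfl⟩ | ⟨rfl, rfl⟩
      · exact Relation.ReflTransGen.head (b := (A.q0, [a])) ⟨[a], [], by simp, hδa⟩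
          (Relation.ReflTransGen.head (b := (A.q0, [])) ⟨[a], [], by simp, hδa⟩
            Relation.ReflTransGen.refl)
      · exact Relation.ReflTransGen.head (b := (A.q0, [a])) ⟨[], [a], by simp, hδa⟩
          (Relation.ReflTransGen.head (b := (A.q0, [])) ⟨[], [a], by simp, hδa⟩
            Relation.ReflTransGen.refl)
    have hmem2 := (heq [a, a] (by simp)).1 haa
    rw [lbabb_count] at hmem2
    simp [List.count_cons] at hmem2
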